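/- The enhanced hypercube Q_{n,k} is a bipartite graph if and only if k is odd. -/

import Mathlib

open SimpleGraph

/-- The `n`-dimensional hypercube: vertices are binary strings of length `n`
(indexed so that bit `i+1` of the paper is index `i`), adjacent iff they
differ in exactly one bit. -/
def hypercube (n : ℕ) : SimpleGraph (Fin n → Bool) where
  Adj u v := ∃! i, u i ≠ v i
  symm := by
    constructor
    rintro u v ⟨i, hi, hu⟩
    exact ⟨i, hi.symm, fun j hj => hu j hj.symm⟩
  loopless := by
    constructor
    rintro u ⟨i, hi, -⟩
    exact hi rfl

/-- Skip relation: `u` and `v` differ exactly in the last `k` bits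
(indices `0, …, k-1`). -/
def skipRel (n k : ℕ) (u v : Fin n → Bool) : Prop :=
  u ≠ v ∧ ∀ i : Fin n, (i.val < k → u i ≠ v i) ∧ (k ≤ i.val → u i = v i)

/-- The enhanced hypercube `Q_{n,k}`: hypercube edges together with skip edges. -/
def enhanced (n k : ℕ) : SimpleGraph (Fin n → Bool) where
  Adj u v := (hypercube n).Adj u v ∨ skipRel n k u v
  symm := by
    constructor
    rintro u v (h | ⟨hne, h⟩)
    · exact Or.inl ((hypercube n).adj_symm h)
    · exact Or.inr ⟨hne.symm, fun i =>
        ⟨fun hi => ((h i).1 hi).symm, fun hi => ((h i).2 hi).symm⟩⟩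
  loopless := by
    constructor
    rintro u (h | ⟨hne, -⟩)
    · exact (hypercube n).irrefl h
    · exact hne rfl

/-- The folded hypercube `FQ_n`: hypercube edges together with complementary edges. -/
def folded (n : ℕ) : SimpleGraph (Fin n → Bool) where
  Adj u v := (hypercube n).Adj u v ∨ (u ≠ v ∧ ∀ i, u i ≠ v i)
  symm := by
    constructor
    rintro u v (h | ⟨hne, h⟩)
    · exact Or.inl ((hypercube n).adj_symm h)
    · exact Or.inr ⟨hne.symm, fun i => (h i).symm⟩
  loopless := by
    constructor
    rintro u (h | ⟨hne, -⟩)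
    · exact (hypercube n).irrefl h
    · exact hne rfl

/-- The Cartesian product `K₂ × G`: two copies of `G` joined by crossing edges. -/
def K2Prod {V : Type*} (G : SimpleGraph V) : SimpleGraph (Bool × V) :=
  (completeGraph Bool) □ G

/-- The edge `e` lies on a cycle of length `l` in `G`. -/
def EdgeOnCycle {V : Type*} (G : SimpleGraph V) (e : Sym2 V) (l : ℕ) : Prop :=
  ∃ (v : V) (c : G.Walk v v), c.IsCycle ∧ c.length = l ∧ e ∈ c.edges

/-- The enhanced hypercube `Q_{n,k}` is bipartite if and only if `k` is odd. -/
lemma zmod2_ne_step (a b : ZMod 2) (h : a ≠ b) : b = a + 1 := by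
  revert h; revert a b; decide

lemma zmod2_add_eq_zero (a b : ZMod 2) : a + b = 0 ↔ a = b := by revert a b; decide

lemma card_filter_lt (n k : ℕ) (h2 : k ≤ n) :
    (Finset.univ.filter (fun i : Fin n => i.val < k)).card = k := by
  have := Finset.card_bij' (s := Finset.univ.filter (fun i : Fin n => i.val < k))
    (t := Finset.range k) (fun i _ => i.val)
    (fun j hj => ⟨j, lt_of_lt_of_le (Finset.mem_range.mp hj) h2⟩)
    (fun a ha => Finset.mem_range.mpr (Finset.mem_filter.mp ha).2)
    (fun a ha => by simp [Finset.mem_range.mp ha])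
    (fun a _ => rfl) (fun a ha => rfl)
  rw [this, Finset.card_range]

lemma diff_card (n : ℕ) (u v : Fin n → Bool) :
    (∑ i, (if u i then (1 : ZMod 2) else 0)) + (∑ i, (if v i then (1 : ZMod 2) else 0))
      = ((Finset.univ.filter (fun i => u i ≠ v i)).card : ZMod 2) := by
  rw [← Finset.sum_add_distrib, ← Finset.sum_boole]
  apply Finset.sum_congr rfl
  intro i _
  cases hu : u i <;> cases hv : v i <;> simp <;> decide

theorem stmt5 (n k : ℕ) (h1 : 1 ≤ k) (h2 : k ≤ n) :
    (enhanced n k).Colorable 2 ↔ Odd k := by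
  constructor
  · rintro ⟨C⟩
    set g : (Fin n → Bool) → ZMod 2 := fun v => (C v : Fin 2) with hg
    have hvalid : ∀ {u v}, (enhanced n k).Adj u v → g u ≠ g v := by
      intro u v h heq
      exact C.valid h heq
    set vtx : ℕ → (Fin n → Bool) := fun j i => decide (i.val < j) with hvtx
    have step : ∀ j, j < k → (enhanced n k).Adj (vtx j) (vtx (j + 1)) := by
      intro j hj
      left
      refine ⟨⟨j, lt_of_lt_of_le hj h2⟩, by simp [hvtx], ?_⟩
      intro i hi
      simp only [hvtx, ne_eq, decide_eq_decide] at hi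
      have : i.val = j := by omega
      exact Fin.ext this
    have parity : ∀ j, j ≤ k → g (vtx j) = g (vtx 0) + (j : ZMod 2) := by
      intro j
      induction j with
      | zero => intro _; simp
      | succ j ih =>
        intro hj
        have h' := ih (Nat.le_of_succ_le hj)
        have := zmod2_ne_step _ _ (hvalid (step j (Nat.lt_of_succ_le hj)))
        rw [this, h']
        push_cast
        ring
    have hskip : (enhanced n k).Adj (vtx k) (vtx 0) := by
      right
      constructor
      · intro heq
        have := congrFun heq ⟨0, lt_of_lt_of_le h1 h2⟩
        simp [hvtx, h1] at this
        omega
      · intro i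
        constructor
        · intro hik
          simp [hvtx, hik]
        · intro hik
          simp [hvtx]; omega
    have hne := hvalid hskip
    rw [parity k le_rfl] at hne
    have hk0 : (k : ZMod 2) ≠ 0 := by
      intro h0
      rw [h0, add_zero] at hne
      exact hne rfl
    rw [Ne, ZMod.natCast_eq_zero_iff] at hk0
    exact Nat.odd_iff.mpr (Nat.two_dvd_ne_zero.mp hk0)
  · intro hk
    have hcol : (enhanced n k).Coloring (ZMod 2) := by
      refine SimpleGraph.Coloring.mk (fun v => ∑ i, (if v i then (1 : ZMod 2) else 0)) ?_
      intro u v hadj heq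
      have hsum : (∑ i, (if u i then (1 : ZMod 2) else 0)) + (∑ i, (if v i then (1 : ZMod 2) else 0))
          = ((Finset.univ.filter (fun i => u i ≠ v i)).card : ZMod 2) := diff_card n u v
      rw [← heq, (zmod2_add_eq_zero _ _).mpr rfl] at hsum
      have hodd : Odd (Finset.univ.filter (fun i => u i ≠ v i)).card := by
        rcases hadj with ⟨i, hi, hu⟩ | ⟨hne, hsk⟩
        · have hfil : Finset.univ.filter (fun j => u j ≠ v j) = {i} := by
            apply Finset.eq_singleton_iff_unique_mem.mpr
            exact ⟨Finset.mem_filter.mpr ⟨Finset.mem_univ _, hi⟩,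
              fun j hj => hu j (Finset.mem_filter.mp hj).2⟩
          rw [hfil, Finset.card_singleton]; exact odd_one
        · have hfil : Finset.univ.filter (fun j => u j ≠ v j)
              = Finset.univ.filter (fun j : Fin n => j.val < k) := by
            apply Finset.filter_congr
            intro j _
            constructor
            · intro hne'
              by_contra hjk
              exact hne' ((hsk j).2 (Nat.le_of_not_lt hjk))
            · intro hjk
              exact (hsk j).1 hjk
          rw [hfil, card_filter_lt n k h2]; exact hk
      have hdvd := (ZMod.natCast_eq_zero_iff _ 2).mp hsum.symm
      have := Nat.odd_iff.mp hodd
      omega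
    have := hcol.colorable
    rwa [ZMod.card 2] at this
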